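/- Let X = {(a,b) ∈ ℕ² : a even, b odd}. Then for every n ≥ 1, d_X(∅;n) = ⌊n/2⌋! · ⌈n/2⌉!. That is, the number of permutations π ∈ 𝔖_n in which no even entry is immediately followed by an odd entry equals ⌊n/2⌋!⌈n/2⌉!. -/

import Mathlib

open Classical in
/-- The `X`-descent set of a word `w = w₁⋯w_n` (stored 0-indexed as a list), as a subset of
`[n-1] = {1, …, n-1}`: position `i` is an `X`-descent iff `(w_i, w_{i+1}) ∈ X`. -/
noncomputable def XDes (X : Set (ℕ × ℕ)) (w : List ℕ) : Finset ℕ :=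
  (Finset.Icc 1 (w.length - 1)).filter (fun i => (w.getD (i - 1) 0, w.getD i 0) ∈ X)

/-- `dX X I S` is the number of permutations of the finite label set `S ⊆ ℕ` (written in
one-line notation as duplicate-free lists using exactly the labels of `S`) whose
`X`-descent set is exactly `I`. -/
noncomputable def dX (X : Set (ℕ × ℕ)) (I : Finset ℕ) (S : Finset ℕ) : ℕ :=
  Nat.card {w : List ℕ // w.Nodup ∧ w.toFinset = S ∧ XDes X w = I}

/-- `dXn X I n = dX X I [n]` where `[n] = {1, …, n}`. -/
noncomputable def dXn (X : Set (ℕ × ℕ)) (I : Finset ℕ) (n : ℕ) : ℕ :=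
  dX X I (Finset.Icc 1 n)

/-- The number of duplicate-free lists with a given `toFinset` is a factorial. -/
lemma cardNodupToFinset (S : Finset ℕ) :
    Nat.card {w : List ℕ // w.Nodup ∧ w.toFinset = S} = S.card.factorial := by
  classical
  set L := S.sort (· ≤ ·) with hL
  have hLnd : L.Nodup := S.sort_nodup _
  have hLfin : L.toFinset = S := Finset.sort_toFinset ..
  have h1 : ∀ w : List ℕ, (w.Nodup ∧ w.toFinset = S) ↔ w ∈ L.permutations.toFinset := by
    intro w
    rw [List.mem_toFinset, List.mem_permutations]
    constructor
    · rintro ⟨hnd, hfs⟩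
      exact List.perm_of_nodup_nodup_toFinset_eq hnd hLnd (hfs.trans hLfin.symm)
    · intro hp
      refine ⟨hp.nodup_iff.mpr hLnd, ?_⟩
      rw [← hLfin]; ext x; simp [hp.mem_iff]
  rw [Nat.card_congr (Equiv.subtypeEquivRight h1), Nat.card_eq_finsetCard,
    List.toFinset_card_of_nodup (List.nodup_permutations _ hLnd),
    List.length_permutations]
  congr 1
  rw [← hLfin, List.toFinset_card_of_nodup hLnd]

lemma xdes_empty_iff (w : List ℕ) :
    XDes {q : ℕ × ℕ | Even q.1 ∧ Odd q.2} w = ∅ ↔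
      w.Chain' (fun a b => ¬(Even a ∧ Odd b)) := by
  classical
  unfold XDes
  dsimp only [List.Chain']
  rw [Finset.eq_empty_iff_forall_notMem, List.isChain_iff_getElem]
  simp only [Finset.mem_filter, not_and]
  constructor
  · intro h i hi
    have hmem : i + 1 ∈ Finset.Icc 1 (w.length - 1) := by
      rw [Finset.mem_Icc]; omega
    have h2 := h (i + 1) hmem
    have e1 : w.getD (i + 1 - 1) 0 = w.get ⟨i, by omega⟩ := by
      rw [List.getD_eq_getElem _ _ (by omega : i + 1 - 1 < w.length)]
      simp
    have e2 : w.getD (i + 1) 0 = w.get ⟨i + 1, by omega⟩ := by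
      rw [List.getD_eq_getElem _ _ (by omega : i + 1 < w.length)]
      simp
    rw [e1, e2] at h2
    simpa using h2
  · intro h i hi
    rw [Finset.mem_Icc] at hi
    obtain ⟨h1, h2⟩ := hi
    have hlen : 1 ≤ w.length := by omega
    have hi' : i - 1 + 1 < w.length := by omega
    have h3 := h (i - 1) hi'
    have e : i - 1 + 1 = i := by omega
    have e1 : w.getD (i - 1) 0 = w.get ⟨i - 1, by omega⟩ := by
      rw [List.getD_eq_getElem _ _ (by omega : i - 1 < w.length)]; simp
    have e2 : w.getD i 0 = w.get ⟨i - 1 + 1, by omega⟩ := by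
      rw [List.getD_eq_getElem _ _ (by omega : i < w.length)]; simp [e]
    rw [Set.mem_setOf_eq, e1, e2]
    simpa using h3

lemma all_even_of_chain' (v : List ℕ) (hc : v.Chain' (fun a b => ¬(Even a ∧ Odd b)))
    (hh : ∀ x ∈ v.head?, Even x) : ∀ x ∈ v, Even x := by
  induction v with
  | nil => simp
  | cons b v ih =>
    dsimp only [List.Chain'] at hc
    rw [List.isChain_cons] at hc
    have hb : Even b := hh b rfl
    intro x hx
    rcases List.mem_cons.mp hx with rfl | hx
    · exact hb
    · refine ih hc.2 ?_ x hx
      intro y hy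
      have := hc.1 y hy
      rw [← Nat.not_odd_iff_even]
      tauto

lemma chain'_of_decomp (u v : List ℕ) (hu : ∀ x ∈ u, Odd x) (hv : ∀ x ∈ v, Even x) :
    (u ++ v).Chain' (fun a b => ¬(Even a ∧ Odd b)) := by
  refine List.IsChain.append ?_ ?_ ?_
  · refine List.Pairwise.isChain ?_
    refine List.pairwise_of_forall_mem_list ?_
    intro a ha b _ hab
    exact (Nat.not_odd_iff_even.mpr hab.1) (hu a ha)
  · refine List.Pairwise.isChain ?_
    refine List.pairwise_of_forall_mem_list ?_
    intro a _ b hb hab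
    exact (Nat.not_odd_iff_even.mpr (hv b hb)).elim hab.2
  · intro x hx y hy hxy
    have hxu : x ∈ u := List.mem_of_mem_getLast? hx
    exact (Nat.not_odd_iff_even.mpr hxy.1) (hu x hxu)

lemma takeWhile_odd_part (u v : List ℕ) (hu : ∀ x ∈ u, Odd x) (hv : ∀ x ∈ v, Even x) :
    (u ++ v).takeWhile (fun x => decide (Odd x)) = u := by
  induction u with
  | nil =>
    cases v with
    | nil => rfl
    | cons b v =>
      have hb : Even b := hv b (by simp)
      simp [List.takeWhile_cons, Nat.not_odd_iff_even.mpr hb]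
  | cons a u ih =>
    have ha : Odd a := hu a (by simp)
    simp only [List.cons_append, List.takeWhile_cons, decide_eq_true_eq]
    rw [if_pos ha, ih (fun x hx => hu x (by simp [hx]))]

/-- Let `X = {(a,b) : a even, b odd}`. Then for every `n ≥ 1`,
`d_X(∅;n) = ⌊n/2⌋! ⌈n/2⌉!`: the number of permutations of `[n]` in which no even entry is
immediately followed by an odd entry is `⌊n/2⌋!⌈n/2⌉!`. -/
theorem stmt14 (n : ℕ) (hn : 1 ≤ n) :
    dXn {q : ℕ × ℕ | Even q.1 ∧ Odd q.2} ∅ n =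
      (n / 2).factorial * ((n + 1) / 2).factorial := by
  classical
  set S : Finset ℕ := Finset.Icc 1 n with hS
  set O : Finset ℕ := S.filter (fun x => Odd x) with hO
  set E : Finset ℕ := S.filter (fun x => Even x) with hE
  -- the bijection
  set p : ℕ → Bool := fun x => decide (Odd x) with hp
  have key : ∀ l : List ℕ, l.Nodup → l.toFinset = O →
      ∀ m : List ℕ, m.Nodup → m.toFinset = E →
      (l ++ m).Nodup ∧ (l ++ m).toFinset = S ∧
        XDes {q : ℕ × ℕ | Even q.1 ∧ Odd q.2} (l ++ m) = ∅ := by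
    intro l hl hlf m hm hmf
    have hlo : ∀ x ∈ l, Odd x := by
      intro x hx
      have : x ∈ O := hlf ▸ List.mem_toFinset.mpr hx
      exact (Finset.mem_filter.mp this).2
    have hme : ∀ x ∈ m, Even x := by
      intro x hx
      have : x ∈ E := hmf ▸ List.mem_toFinset.mpr hx
      exact (Finset.mem_filter.mp this).2
    refine ⟨List.Nodup.append hl hm ?_, ?_, ?_⟩
    · intro x hxl hxm
      exact (Nat.not_odd_iff_even.mpr (hme x hxm)) (hlo x hxl)
    · rw [List.toFinset_append, hlf, hmf]
      ext x
      simp only [Finset.mem_union, hO, hE, Finset.mem_filter]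
      constructor
      · tauto
      · intro hx
        rcases Nat.even_or_odd x with he | ho
        · exact Or.inr ⟨hx, he⟩
        · exact Or.inl ⟨hx, ho⟩
    · exact (xdes_empty_iff _).mpr (chain'_of_decomp l m hlo hme)
  have hbij : Nat.card ({u : List ℕ // u.Nodup ∧ u.toFinset = O} ×
      {v : List ℕ // v.Nodup ∧ v.toFinset = E}) =
      Nat.card {w : List ℕ // w.Nodup ∧ w.toFinset = S ∧
        XDes {q : ℕ × ℕ | Even q.1 ∧ Odd q.2} w = ∅} := by
    apply Nat.card_eq_of_bijective
      (f := fun uv => ⟨uv.1.1 ++ uv.2.1,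
        key uv.1.1 uv.1.2.1 uv.1.2.2 uv.2.1 uv.2.2.1 uv.2.2.2⟩)
    constructor
    · rintro ⟨⟨u₁, hu₁⟩, ⟨v₁, hv₁⟩⟩ ⟨⟨u₂, hu₂⟩, ⟨v₂, hv₂⟩⟩ h
      have heq : u₁ ++ v₁ = u₂ ++ v₂ := congrArg Subtype.val h
      have ho : ∀ (u : List ℕ), u.toFinset = O → ∀ x ∈ u, Odd x := by
        intro u hu x hx
        have : x ∈ O := hu ▸ List.mem_toFinset.mpr hx
        exact (Finset.mem_filter.mp this).2
      have he : ∀ (v : List ℕ), v.toFinset = E → ∀ x ∈ v, Even x := by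
        intro v hv x hx
        have : x ∈ E := hv ▸ List.mem_toFinset.mpr hx
        exact (Finset.mem_filter.mp this).2
      have h1 : u₁ = u₂ := by
        have t1 := takeWhile_odd_part u₁ v₁ (ho u₁ hu₁.2) (he v₁ hv₁.2)
        have t2 := takeWhile_odd_part u₂ v₂ (ho u₂ hu₂.2) (he v₂ hv₂.2)
        rw [← t1, ← t2, heq]
      have h2 : v₁ = v₂ := by
        rw [h1] at heq
        exact List.append_cancel_left heq
      simp [Prod.ext_iff, Subtype.ext_iff, h1, h2]
    · rintro ⟨w, hnd, hfs, hdes⟩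
      have hch : w.Chain' (fun a b => ¬(Even a ∧ Odd b)) := (xdes_empty_iff w).mp hdes
      set u := w.takeWhile p with hu
      set v := w.dropWhile p with hv
      have hweq : u ++ v = w := List.takeWhile_append_dropWhile (p := p) (l := w)
      have huodd : ∀ x ∈ u, Odd x := by
        intro x hx
        have := List.mem_takeWhile_imp hx
        simpa [hp] using this
      have hveven : ∀ x ∈ v, Even x := by
        refine all_even_of_chain' v (hch.suffix (List.dropWhile_suffix p)) ?_
        intro x hx
        have h0 := List.head?_dropWhile_not p w
        rw [← hv] at h0
        cases hhd : v.head? with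
        | none => simp [hhd] at hx
        | some y =>
          rw [hhd] at h0
          have hxy : y = x := by simpa [hhd] using hx
          subst hxy
          rw [← Nat.not_odd_iff_even]
          simpa [hp] using h0
      have husub : u.Sublist w := List.takeWhile_sublist p
      have hvsub : v.Sublist w := List.dropWhile_sublist p
      have hund : u.Nodup := hnd.sublist husub
      have hvnd : v.Nodup := hnd.sublist hvsub
      have hmemw : ∀ x, x ∈ w ↔ x ∈ S := by
        intro x
        rw [← hfs, List.mem_toFinset]
      have huf : u.toFinset = O := by
        ext x
        rw [List.mem_toFinset, hO, Finset.mem_filter]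
        constructor
        · intro hx
          exact ⟨(hmemw x).mp (husub.mem hx), huodd x hx⟩
        · rintro ⟨hxS, hxo⟩
          have hxw : x ∈ w := (hmemw x).mpr hxS
          rw [← hweq, List.mem_append] at hxw
          rcases hxw with h | h
          · exact h
          · exact absurd (hveven x h) (by rwa [← Nat.not_odd_iff_even, not_not])
      have hvf : v.toFinset = E := by
        ext x
        rw [List.mem_toFinset, hE, Finset.mem_filter]
        constructor
        · intro hx
          exact ⟨(hmemw x).mp (hvsub.mem hx), hveven x hx⟩
        · rintro ⟨hxS, hxe⟩
          have hxw : x ∈ w := (hmemw x).mpr hxS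
          rw [← hweq, List.mem_append] at hxw
          rcases hxw with h | h
          · exact absurd (huodd x h) (Nat.not_odd_iff_even.mpr hxe)
          · exact h
      exact ⟨⟨⟨u, hund, huf⟩, ⟨v, hvnd, hvf⟩⟩, Subtype.ext hweq⟩
  have hOcard : O.card = (n + 1) / 2 := by
    have : O = (Finset.range ((n + 1) / 2)).image (fun k => 2 * k + 1) := by
      ext x
      simp only [hO, hS, Finset.mem_filter, Finset.mem_Icc, Finset.mem_image,
        Finset.mem_range, Nat.odd_iff]
      constructor
      · rintro ⟨⟨h1, h2⟩, h3⟩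
        exact ⟨x / 2, by omega, by omega⟩
      · rintro ⟨k, hk, rfl⟩
        omega
    rw [this, Finset.card_image_of_injective _ (fun a b h => by omega), Finset.card_range]
  have hEcard : E.card = n / 2 := by
    have : E = (Finset.Icc 1 (n / 2)).image (fun k => 2 * k) := by
      ext x
      simp only [hE, hS, Finset.mem_filter, Finset.mem_Icc, Finset.mem_image,
        Nat.even_iff]
      constructor
      · rintro ⟨⟨h1, h2⟩, h3⟩
        exact ⟨x / 2, by omega, by omega⟩
      · rintro ⟨k, hk, rfl⟩
        omega
    rw [this, Finset.card_image_of_injective _ (fun a b h => by omega), Nat.card_Icc]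
    omega
  show Nat.card {w : List ℕ // w.Nodup ∧ w.toFinset = S ∧
      XDes {q : ℕ × ℕ | Even q.1 ∧ Odd q.2} w = ∅} = _
  rw [← hbij, Nat.card_prod, cardNodupToFinset, cardNodupToFinset, hOcard, hEcard,
    Nat.mul_comm]
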